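/- Every unimodal permutation of {1,...,n} can be written as a product of two unimodal permutations in exactly n ways. -/
import Mathlib

/-- A permutation of `Fin n` is unimodal if it strictly increases up to some
position `m` and strictly decreases afterwards. -/
def Unimodal {n : ℕ} (σ : Equiv.Perm (Fin n)) : Prop :=
  ∃ m : Fin n, StrictMonoOn σ {i | i ≤ m} ∧ StrictAntiOn σ {i | m ≤ i}

namespace UFact

lemma monoVal {σ : Equiv.Perm (Fin (N+1))} {m : Fin (N+1)}
    (hmono : StrictMonoOn σ {i | i ≤ m}) :
    ∀ i j : Fin (N+1), j.val ≤ m.val → i.val < j.val → (σ i).val < (σ j).val := by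
  intro i j hj hij
  exact Fin.lt_def.mp (hmono (Fin.le_def.mpr (by omega)) (Fin.le_def.mpr hj)
    (Fin.lt_def.mpr hij))

lemma antiVal {σ : Equiv.Perm (Fin (N+1))} {m : Fin (N+1)}
    (hanti : StrictAntiOn σ {i | m ≤ i}) :
    ∀ i j : Fin (N+1), m.val ≤ i.val → i.val < j.val → (σ j).val < (σ i).val := by
  intro i j hi hij
  exact Fin.lt_def.mp (hanti (Fin.le_def.mpr hi) (Fin.le_def.mpr (by omega))
    (Fin.lt_def.mpr (by omega)))

lemma card_upper (σ : Equiv.Perm (Fin (N+1))) (p : Fin (N+1)) :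
    (Finset.univ.filter (fun q => (σ p).val ≤ (σ q).val)).card = N + 1 - (σ p).val := by
  classical
  have h1 : Finset.univ.filter (fun q => (σ p).val ≤ (σ q).val)
      = (Finset.Ici (σ p)).map σ.symm.toEmbedding := by
    ext q
    simp only [Finset.mem_filter, Finset.mem_univ, true_and, Finset.mem_map,
      Finset.mem_Ici, Equiv.coe_toEmbedding]
    constructor
    · intro h
      exact ⟨σ q, Fin.le_def.mpr h, σ.symm_apply_apply q⟩
    · rintro ⟨v, hv, rfl⟩
      have : σ (σ.symm v) = v := σ.apply_symm_apply v
      rw [this]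
      exact Fin.le_def.mp hv
  rw [h1, Finset.card_map, Fin.card_Ici]

/-- Case A counting lemma: if `m ≤ p` then `{q | σ p ≤ σ q} = [p + σp - N, p]`. -/
lemma upperA {σ : Equiv.Perm (Fin (N+1))} {m : Fin (N+1)}
    (hmono : StrictMonoOn σ {i | i ≤ m}) (hanti : StrictAntiOn σ {i | m ≤ i})
    (p : Fin (N+1)) (hmp : m.val ≤ p.val) :
    N ≤ p.val + (σ p).val ∧
      ∀ q : Fin (N+1),
        ((σ p).val ≤ (σ q).val ↔ p.val + (σ p).val ≤ q.val + N ∧ q.val ≤ p.val) := by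
  classical
  have hpeak : (σ m).val = N := by
    have h2 := (σ m).isLt
    have hmax : ∀ i, (σ i).val ≤ (σ m).val := by
      intro i
      rcases lt_trichotomy i.val m.val with h | h | h
      · exact (monoVal hmono i m le_rfl h).le
      · rw [show i = m from Fin.ext h]
      · exact (antiVal hanti m i le_rfl h).le
    obtain ⟨i, hi⟩ := σ.surjective (Fin.last N)
    have h1 := hmax i
    rw [hi] at h1
    simp only [Fin.val_last] at h1
    omega
  set K := Finset.univ.filter (fun q => (σ p).val ≤ (σ q).val) with hK
  have hpK : p ∈ K := by simp [hK]
  have hle : ∀ q ∈ K, q.val ≤ p.val := by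
    intro q hq
    simp only [hK, Finset.mem_filter] at hq
    by_contra hc
    exact absurd hq.2 (by have := antiVal hanti p q hmp (by omega); omega)
  set l := K.min' ⟨p, hpK⟩ with hl
  have hlK : l ∈ K := K.min'_mem _
  have hlval : (σ p).val ≤ (σ l).val := by
    simp only [hK, Finset.mem_filter] at hlK; exact hlK.2
  have hlm : l.val ≤ m.val := by
    have : m ∈ K := by
      simp only [hK, Finset.mem_filter, Finset.mem_univ, true_and]
      have := (σ p).isLt; omega
    have := K.min'_le m this
    exact le_trans (Fin.le_def.mp this) le_rfl
  have hKeq : K = Finset.Icc l p := by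
    ext q
    simp only [Finset.mem_Icc]
    constructor
    · intro hq
      exact ⟨K.min'_le q hq, Fin.le_def.mpr (hle q hq)⟩
    · rintro ⟨h1, h2⟩
      simp only [hK, Finset.mem_filter, Finset.mem_univ, true_and]
      have h1' := Fin.le_def.mp h1
      have h2' := Fin.le_def.mp h2
      rcases le_or_gt q.val m.val with hc | hc
      · rcases eq_or_lt_of_le h1' with he | hlt
        · rw [show q = l from (Fin.ext he.symm)]; exact hlval
        · exact le_trans hlval (monoVal hmono l q hc hlt).le
      · rcases eq_or_lt_of_le h2' with he | hlt
        · rw [show q = p from Fin.ext he]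
        · exact (antiVal hanti q p (by omega) hlt).le
  have hcard := card_upper σ p
  rw [← hK, hKeq, Fin.card_Icc] at hcard
  have hsp := (σ p).isLt
  have hlp : l.val ≤ p.val := hle l hlK
  have hkey : l.val + N = p.val + (σ p).val := by omega
  refine ⟨by omega, fun q => ?_⟩
  constructor
  · intro h
    have hqK : q ∈ K := by
      simp only [hK, Finset.mem_filter, Finset.mem_univ, true_and]; exact h
    rw [hKeq] at hqK
    simp only [Finset.mem_Icc] at hqK
    have := Fin.le_def.mp hqK.1
    have := Fin.le_def.mp hqK.2
    omega
  · intro ⟨h1, h2⟩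
    have hqK : q ∈ K := by
      rw [hKeq]
      simp only [Finset.mem_Icc]
      exact ⟨Fin.le_def.mpr (by omega), Fin.le_def.mpr h2⟩
    simp only [hK, Finset.mem_filter] at hqK
    exact hqK.2

/-- Case B counting lemma: if `p ≤ m` then `{q | σ p ≤ σ q} = [p, p + N - σp]`. -/
lemma upperB {σ : Equiv.Perm (Fin (N+1))} {m : Fin (N+1)}
    (hmono : StrictMonoOn σ {i | i ≤ m}) (hanti : StrictAntiOn σ {i | m ≤ i})
    (p : Fin (N+1)) (hmp : p.val ≤ m.val) :
    p.val ≤ (σ p).val ∧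
      ∀ q : Fin (N+1),
        ((σ p).val ≤ (σ q).val ↔ p.val ≤ q.val ∧ q.val + (σ p).val ≤ p.val + N) := by
  classical
  have hpeak : (σ m).val = N := by
    have h2 := (σ m).isLt
    have hmax : ∀ i, (σ i).val ≤ (σ m).val := by
      intro i
      rcases lt_trichotomy i.val m.val with h | h | h
      · exact (monoVal hmono i m le_rfl h).le
      · rw [show i = m from Fin.ext h]
      · exact (antiVal hanti m i le_rfl h).le
    obtain ⟨i, hi⟩ := σ.surjective (Fin.last N)
    have h1 := hmax i
    rw [hi] at h1
    simp only [Fin.val_last] at h1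
    omega
  set K := Finset.univ.filter (fun q => (σ p).val ≤ (σ q).val) with hK
  have hpK : p ∈ K := by simp [hK]
  have hge : ∀ q ∈ K, p.val ≤ q.val := by
    intro q hq
    simp only [hK, Finset.mem_filter] at hq
    by_contra hc
    exact absurd hq.2 (by have := monoVal hmono q p hmp (by omega); omega)
  set r := K.max' ⟨p, hpK⟩ with hr
  have hrK : r ∈ K := K.max'_mem _
  have hrval : (σ p).val ≤ (σ r).val := by
    simp only [hK, Finset.mem_filter] at hrK; exact hrK.2
  have hrm : m.val ≤ r.val := by
    have : m ∈ K := by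
      simp only [hK, Finset.mem_filter, Finset.mem_univ, true_and]
      have := (σ p).isLt; omega
    exact Fin.le_def.mp (K.le_max' m this)
  have hKeq : K = Finset.Icc p r := by
    ext q
    simp only [Finset.mem_Icc]
    constructor
    · intro hq
      exact ⟨Fin.le_def.mpr (hge q hq), K.le_max' q hq⟩
    · rintro ⟨h1, h2⟩
      simp only [hK, Finset.mem_filter, Finset.mem_univ, true_and]
      have h1' := Fin.le_def.mp h1
      have h2' := Fin.le_def.mp h2
      rcases le_or_gt m.val q.val with hc | hc
      · rcases eq_or_lt_of_le h2' with he | hlt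
        · rw [show q = r from (Fin.ext he)]; exact hrval
        · exact le_trans hrval (antiVal hanti q r hc hlt).le
      · rcases eq_or_lt_of_le h1' with he | hlt
        · rw [show q = p from Fin.ext he.symm]
        · exact (monoVal hmono p q (by omega) hlt).le
  have hcard := card_upper σ p
  rw [← hK, hKeq, Fin.card_Icc] at hcard
  have hsp := (σ p).isLt
  have hrp : p.val ≤ r.val := hge r hrK
  have hrN := r.isLt
  have hkey : r.val + (σ p).val = p.val + N := by omega
  refine ⟨by omega, fun q => ?_⟩
  constructor
  · intro h
    have hqK : q ∈ K := by
      simp only [hK, Finset.mem_filter, Finset.mem_univ, true_and]; exact h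
    rw [hKeq] at hqK
    simp only [Finset.mem_Icc] at hqK
    have := Fin.le_def.mp hqK.1
    have := Fin.le_def.mp hqK.2
    omega
  · intro ⟨h1, h2⟩
    have hqK : q ∈ K := by
      rw [hKeq]
      simp only [Finset.mem_Icc]
      exact ⟨Fin.le_def.mpr h1, Fin.le_def.mpr (by omega)⟩
    simp only [hK, Finset.mem_filter] at hqK
    exact hqK.2

lemma smCount {f : Fin (N+1) → Fin (N+1)} {mm : Fin (N+1)}
    (h : StrictMonoOn f {i | i ≤ mm}) :
    ∀ (d : ℕ) (i j : Fin (N+1)), j.val ≤ mm.val → i.val + d = j.val →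
      (f i).val + d ≤ (f j).val := by
  intro d
  induction d with
  | zero => intro i j _ hij; rw [show i = j from Fin.ext (by omega)]; omega
  | succ d ih =>
    intro i j hj hij
    have hjlt : (j : ℕ) ≤ N := by omega
    set j' : Fin (N+1) := ⟨i.val + d, by omega⟩ with hj'
    have hj'v : j'.val = i.val + d := rfl
    have h1 := ih i j' (by omega) rfl
    have h2 : (f j').val < (f j).val := by
      exact Fin.lt_def.mp (h (Fin.le_def.mpr (by omega)) (Fin.le_def.mpr hj)
        (Fin.lt_def.mpr (by omega)))
    omega

lemma anCount {f : Fin (N+1) → Fin (N+1)} {mm : Fin (N+1)}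
    (h : StrictAntiOn f {i | mm ≤ i}) :
    ∀ (d : ℕ) (i j : Fin (N+1)), mm.val ≤ i.val → i.val + d = j.val →
      (f j).val + d ≤ (f i).val := by
  intro d
  induction d with
  | zero => intro i j _ hij; rw [show i = j from Fin.ext (by omega)]; omega
  | succ d ih =>
    intro i j hi hij
    set j' : Fin (N+1) := ⟨i.val + d, by omega⟩ with hj'
    have hj'v : j'.val = i.val + d := rfl
    have h1 := ih i j' hi rfl
    have h2 : (f j).val < (f j').val := by
      exact Fin.lt_def.mp (h (Fin.le_def.mpr (by omega)) (Fin.le_def.mpr (by omega))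
        (Fin.lt_def.mpr (by omega)))
    omega

lemma peakVal {σ : Equiv.Perm (Fin (N+1))} {m : Fin (N+1)}
    (hmono : StrictMonoOn σ {i | i ≤ m}) (hanti : StrictAntiOn σ {i | m ≤ i}) :
    (σ m).val = N := by
  have h2 := (σ m).isLt
  have hmax : ∀ i, (σ i).val ≤ (σ m).val := by
    intro i
    rcases lt_trichotomy i.val m.val with h | h | h
    · exact (monoVal hmono i m le_rfl h).le
    · rw [show i = m from Fin.ext h]
    · exact (antiVal hanti m i le_rfl h).le
  obtain ⟨i, hi⟩ := σ.surjective (Fin.last N)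
  have h1 := hmax i
  rw [hi] at h1
  simp only [Fin.val_last] at h1
  omega

lemma existsA {σ : Equiv.Perm (Fin (N+1))} {m : Fin (N+1)}
    (hmono : StrictMonoOn σ {i | i ≤ m}) (hanti : StrictAntiOn σ {i | m ≤ i})
    (p : Fin (N+1)) (hmp : m.val ≤ p.val) :
    ∃ τ ρ : Equiv.Perm (Fin (N+1)),
      Unimodal τ ∧ Unimodal ρ ∧ τ * ρ = σ ∧ ρ p = Fin.last N := by
  classical
  obtain ⟨hsum, hiff⟩ := upperA hmono hanti p hmp
  have hpeak : (σ m).val = N := peakVal hmono hanti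
  have hsp := (σ p).isLt
  have hpN := p.isLt
  have hmN := m.isLt
  -- p + s ≤ m + N, i.e. the left endpoint a is ≤ m
  have ham : p.val + (σ p).val ≤ m.val + N := ((hiff m).mp (by omega)).1
  -- the map ρ
  set fρ : Fin (N+1) → Fin (N+1) := fun q =>
    if h : (σ p).val ≤ (σ q).val then
      ⟨q.val + N - p.val, by have h2 := ((hiff q).mp h).2; omega⟩
    else σ q with hfρ
  have hv1 : ∀ q, (h : (σ p).val ≤ (σ q).val) → (fρ q).val = q.val + N - p.val := by
    intro q h; simp only [hfρ, dif_pos h]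
  have hv2 : ∀ q, ¬ (σ p).val ≤ (σ q).val → fρ q = σ q := by
    intro q h; simp only [hfρ, dif_neg h]
  have hinj : Function.Injective fρ := by
    intro q q' he
    by_cases h1 : (σ p).val ≤ (σ q).val <;> by_cases h2 : (σ p).val ≤ (σ q').val
    · have e1 := hv1 q h1; have e2 := hv1 q' h2
      have c1 := (hiff q).mp h1; have c2 := (hiff q').mp h2
      rw [he] at e1
      exact Fin.ext (by omega)
    · exfalso
      have e1 := hv1 q h1; have e2 := hv2 q' h2
      have c1 := (hiff q).mp h1
      rw [he, e2] at e1
      omega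
    · exfalso
      have e1 := hv1 q' h2; have e2 := hv2 q h1
      have c1 := (hiff q').mp h2
      rw [← he, e2] at e1
      omega
    · rw [hv2 q h1, hv2 q' h2] at he
      exact σ.injective he
  set ρ : Equiv.Perm (Fin (N+1)) := Equiv.ofBijective fρ
    (Finite.injective_iff_bijective.mp hinj) with hρdef
  have hρ : ∀ q, ρ q = fρ q := fun q => rfl
  -- ρ is unimodal with peak p
  have hρmono : StrictMonoOn ρ {i | i ≤ p} := by
    intro i hi j hj hij
    have hi' : i.val ≤ p.val := Fin.le_def.mp hi
    have hj' : j.val ≤ p.val := Fin.le_def.mp hj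
    have hij' : i.val < j.val := Fin.lt_def.mp hij
    rw [Fin.lt_def, hρ, hρ]
    by_cases hbi : (σ p).val ≤ (σ i).val <;> by_cases hbj : (σ p).val ≤ (σ j).val
    · rw [hv1 i hbi, hv1 j hbj]
      have c1 := (hiff i).mp hbi
      omega
    · exfalso
      have c1 := (hiff i).mp hbi
      exact hbj ((hiff j).mpr (by omega))
    · rw [hv2 i hbi, hv1 j hbj]
      have c2 := (hiff j).mp hbj
      omega
    · rw [hv2 i hbi, hv2 j hbj]
      have hc : j.val + N < p.val + (σ p).val := by
        by_contra hc
        exact hbj ((hiff j).mpr (by omega))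
      exact monoVal hmono i j (by omega) hij'
  have hρanti : StrictAntiOn ρ {i | p ≤ i} := by
    intro i hi j hj hij
    have hi' : p.val ≤ i.val := Fin.le_def.mp hi
    have hj' : p.val ≤ j.val := Fin.le_def.mp hj
    have hij' : i.val < j.val := Fin.lt_def.mp hij
    rw [Fin.lt_def, hρ, hρ]
    have hbj : ¬ (σ p).val ≤ (σ j).val := by
      intro h
      have c := (hiff j).mp h
      omega
    rw [hv2 j hbj]
    have hσj : (σ j).val < (σ p).val := by omega
    by_cases hbi : (σ p).val ≤ (σ i).val
    · rw [hv1 i hbi]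
      have c := (hiff i).mp hbi
      have hσpm : (σ p).val ≤ N := by omega
      omega
    · rw [hv2 i hbi]
      exact antiVal hanti i j (by omega) hij'
  -- the map τ
  set fτ : Fin (N+1) → Fin (N+1) := fun v =>
    if h : (σ p).val ≤ v.val then
      σ ⟨v.val + p.val - N, by have := v.isLt; omega⟩
    else v with hfτ
  have hw1 : ∀ v, (h : (σ p).val ≤ v.val) →
      fτ v = σ ⟨v.val + p.val - N, by have := v.isLt; omega⟩ := by
    intro v h; simp only [hfτ, dif_pos h]
  have hw2 : ∀ v, ¬ (σ p).val ≤ v.val → fτ v = v := by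
    intro v h; simp only [hfτ, dif_neg h]
  have himg : ∀ v : Fin (N+1), (σ p).val ≤ v.val →
      (σ p).val ≤ (σ (⟨v.val + p.val - N, by have := v.isLt; omega⟩ : Fin (N+1))).val := by
    intro v hv
    have hvN := v.isLt
    exact (hiff _).mpr (by simp only; omega)
  have hτinj : Function.Injective fτ := by
    intro v v' he
    by_cases h1 : (σ p).val ≤ v.val <;> by_cases h2 : (σ p).val ≤ v'.val
    · rw [hw1 v h1, hw1 v' h2] at he
      have hmk := σ.injective he
      rw [Fin.mk_eq_mk] at hmk
      have hvN := v.isLt; have hv'N := v'.isLt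
      exact Fin.ext (by omega)
    · exfalso
      have e1 := himg v h1
      rw [hw1 v h1, hw2 v' h2] at he
      rw [he] at e1
      omega
    · exfalso
      have e1 := himg v' h2
      rw [hw1 v' h2, hw2 v h1] at he
      rw [← he] at e1
      omega
    · rw [hw2 v h1, hw2 v' h2] at he
      exact he
  set τ : Equiv.Perm (Fin (N+1)) := Equiv.ofBijective fτ
    (Finite.injective_iff_bijective.mp hτinj) with hτdef
  have hτ : ∀ v, τ v = fτ v := fun v => rfl
  set mτ : Fin (N+1) := ⟨m.val + N - p.val, by omega⟩ with hmτ
  have hmτv : mτ.val = m.val + N - p.val := rfl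
  have hsmτ : (σ p).val ≤ mτ.val := by omega
  have hτmono : StrictMonoOn τ {i | i ≤ mτ} := by
    intro i hi j hj hij
    have hi' : i.val ≤ mτ.val := Fin.le_def.mp hi
    have hj' : j.val ≤ mτ.val := Fin.le_def.mp hj
    have hij' : i.val < j.val := Fin.lt_def.mp hij
    rw [Fin.lt_def, hτ, hτ]
    by_cases hbi : (σ p).val ≤ i.val <;> by_cases hbj : (σ p).val ≤ j.val
    · rw [hw1 i hbi, hw1 j hbj]
      have hiN := i.isLt; have hjN := j.isLt
      exact monoVal hmono _ _ (by simp only; omega) (by simp only; omega)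
    · omega
    · rw [hw2 i hbi, hw1 j hbj]
      have := himg j hbj
      omega
    · rw [hw2 i hbi, hw2 j hbj]; exact hij'
  have hτanti : StrictAntiOn τ {i | mτ ≤ i} := by
    intro i hi j hj hij
    have hi' : mτ.val ≤ i.val := Fin.le_def.mp hi
    have hj' : mτ.val ≤ j.val := Fin.le_def.mp hj
    have hij' : i.val < j.val := Fin.lt_def.mp hij
    rw [Fin.lt_def, hτ, hτ]
    have hbi : (σ p).val ≤ i.val := by omega
    have hbj : (σ p).val ≤ j.val := by omega
    rw [hw1 i hbi, hw1 j hbj]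
    have hiN := i.isLt; have hjN := j.isLt
    exact antiVal hanti _ _ (by simp only; omega) (by simp only; omega)
  refine ⟨τ, ρ, ⟨mτ, hτmono, hτanti⟩, ⟨p, hρmono, hρanti⟩, ?_, ?_⟩
  · apply Equiv.ext
    intro q
    rw [Equiv.Perm.mul_apply, hρ, hτ]
    by_cases hb : (σ p).val ≤ (σ q).val
    · have c := (hiff q).mp hb
      have hvq := hv1 q hb
      have hge : (σ p).val ≤ (fρ q).val := by omega
      rw [hw1 _ hge]
      apply congrArg
      apply Fin.ext
      show (fρ q).val + p.val - N = q.val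
      omega
    · rw [hv2 q hb, hw2 _ (by omega)]
  · rw [hρ]
    apply Fin.ext
    rw [hv1 p le_rfl, Fin.val_last]
    omega

lemma existsB {σ : Equiv.Perm (Fin (N+1))} {m : Fin (N+1)}
    (hmono : StrictMonoOn σ {i | i ≤ m}) (hanti : StrictAntiOn σ {i | m ≤ i})
    (p : Fin (N+1)) (hmp : p.val ≤ m.val) :
    ∃ τ ρ : Equiv.Perm (Fin (N+1)),
      Unimodal τ ∧ Unimodal ρ ∧ τ * ρ = σ ∧ ρ p = Fin.last N := by
  classical
  obtain ⟨hps, hiff⟩ := upperB hmono hanti p hmp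
  have hpeak : (σ m).val = N := peakVal hmono hanti
  have hsp := (σ p).isLt
  have hpN := p.isLt
  have hmN := m.isLt
  have hbm : m.val + (σ p).val ≤ p.val + N := ((hiff m).mp (by omega)).2
  -- the map ρ
  set fρ : Fin (N+1) → Fin (N+1) := fun q =>
    if h : (σ p).val ≤ (σ q).val then
      ⟨p.val + N - q.val, by have h2 := ((hiff q).mp h).1; omega⟩
    else σ q with hfρ
  have hv1 : ∀ q, (h : (σ p).val ≤ (σ q).val) → (fρ q).val = p.val + N - q.val := by
    intro q h; simp only [hfρ, dif_pos h]
  have hv2 : ∀ q, ¬ (σ p).val ≤ (σ q).val → fρ q = σ q := by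
    intro q h; simp only [hfρ, dif_neg h]
  have hinj : Function.Injective fρ := by
    intro q q' he
    by_cases h1 : (σ p).val ≤ (σ q).val <;> by_cases h2 : (σ p).val ≤ (σ q').val
    · have e1 := hv1 q h1; have e2 := hv1 q' h2
      have c1 := (hiff q).mp h1; have c2 := (hiff q').mp h2
      have hqN := q.isLt; have hq'N := q'.isLt
      rw [he] at e1
      exact Fin.ext (by omega)
    · exfalso
      have e1 := hv1 q h1; have e2 := hv2 q' h2
      have c1 := (hiff q).mp h1
      rw [he, e2] at e1
      omega
    · exfalso
      have e1 := hv1 q' h2; have e2 := hv2 q h1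
      have c1 := (hiff q').mp h2
      rw [← he, e2] at e1
      omega
    · rw [hv2 q h1, hv2 q' h2] at he
      exact σ.injective he
  set ρ : Equiv.Perm (Fin (N+1)) := Equiv.ofBijective fρ
    (Finite.injective_iff_bijective.mp hinj) with hρdef
  have hρ : ∀ q, ρ q = fρ q := fun q => rfl
  -- ρ is unimodal with peak p
  have hρmono : StrictMonoOn ρ {i | i ≤ p} := by
    intro i hi j hj hij
    have hi' : i.val ≤ p.val := Fin.le_def.mp hi
    have hj' : j.val ≤ p.val := Fin.le_def.mp hj
    have hij' : i.val < j.val := Fin.lt_def.mp hij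
    rw [Fin.lt_def, hρ, hρ]
    have hbi : ¬ (σ p).val ≤ (σ i).val := by
      intro h
      have c := (hiff i).mp h
      omega
    rw [hv2 i hbi]
    have hσi : (σ i).val < (σ p).val := monoVal hmono i p hmp (by omega)
    by_cases hbj : (σ p).val ≤ (σ j).val
    · rw [hv1 j hbj]
      have c := (hiff j).mp hbj
      omega
    · rw [hv2 j hbj]
      exact monoVal hmono i j (by omega) hij'
  have hρanti : StrictAntiOn ρ {i | p ≤ i} := by
    intro i hi j hj hij
    have hi' : p.val ≤ i.val := Fin.le_def.mp hi
    have hj' : p.val ≤ j.val := Fin.le_def.mp hj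
    have hij' : i.val < j.val := Fin.lt_def.mp hij
    have hiN := i.isLt; have hjN := j.isLt
    rw [Fin.lt_def, hρ, hρ]
    by_cases hbi : (σ p).val ≤ (σ i).val <;> by_cases hbj : (σ p).val ≤ (σ j).val
    · rw [hv1 i hbi, hv1 j hbj]
      omega
    · rw [hv1 i hbi, hv2 j hbj]
      have c := (hiff i).mp hbi
      omega
    · exfalso
      have c := (hiff j).mp hbj
      exact hbi ((hiff i).mpr (by omega))
    · rw [hv2 i hbi, hv2 j hbj]
      have hc : p.val + N < i.val + (σ p).val := by
        by_contra hc
        exact hbi ((hiff i).mpr (by omega))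
      exact antiVal hanti i j (by omega) hij'
  -- the map τ
  set fτ : Fin (N+1) → Fin (N+1) := fun v =>
    if h : (σ p).val ≤ v.val then
      σ ⟨p.val + N - v.val, by omega⟩
    else v with hfτ
  have hw1 : ∀ v, (h : (σ p).val ≤ v.val) →
      fτ v = σ ⟨p.val + N - v.val, by omega⟩ := by
    intro v h; simp only [hfτ, dif_pos h]
  have hw2 : ∀ v, ¬ (σ p).val ≤ v.val → fτ v = v := by
    intro v h; simp only [hfτ, dif_neg h]
  have himg : ∀ v : Fin (N+1), (h : (σ p).val ≤ v.val) →
      (σ p).val ≤ (σ (⟨p.val + N - v.val, by omega⟩ : Fin (N+1))).val := by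
    intro v hv
    have hvN := v.isLt
    refine (hiff _).mpr ⟨?_, ?_⟩
    · show p.val ≤ p.val + N - v.val
      omega
    · show (p.val + N - v.val) + (σ p).val ≤ p.val + N
      omega
  have hτinj : Function.Injective fτ := by
    intro v v' he
    by_cases h1 : (σ p).val ≤ v.val <;> by_cases h2 : (σ p).val ≤ v'.val
    · rw [hw1 v h1, hw1 v' h2] at he
      have hmk := σ.injective he
      rw [Fin.mk_eq_mk] at hmk
      have hvN := v.isLt; have hv'N := v'.isLt
      exact Fin.ext (by omega)
    · exfalso
      have e1 := himg v h1
      rw [hw1 v h1, hw2 v' h2] at he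
      rw [he] at e1
      omega
    · exfalso
      have e1 := himg v' h2
      rw [hw1 v' h2, hw2 v h1] at he
      rw [← he] at e1
      omega
    · rw [hw2 v h1, hw2 v' h2] at he
      exact he
  set τ : Equiv.Perm (Fin (N+1)) := Equiv.ofBijective fτ
    (Finite.injective_iff_bijective.mp hτinj) with hτdef
  have hτ : ∀ v, τ v = fτ v := fun v => rfl
  set mτ : Fin (N+1) := ⟨p.val + N - m.val, by omega⟩ with hmτ
  have hmτv : mτ.val = p.val + N - m.val := rfl
  have hsmτ : (σ p).val ≤ mτ.val := by omega
  have hτmono : StrictMonoOn τ {i | i ≤ mτ} := by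
    intro i hi j hj hij
    have hi' : i.val ≤ mτ.val := Fin.le_def.mp hi
    have hj' : j.val ≤ mτ.val := Fin.le_def.mp hj
    have hij' : i.val < j.val := Fin.lt_def.mp hij
    have hiN := i.isLt; have hjN := j.isLt
    rw [Fin.lt_def, hτ, hτ]
    by_cases hbi : (σ p).val ≤ i.val <;> by_cases hbj : (σ p).val ≤ j.val
    · rw [hw1 i hbi, hw1 j hbj]
      exact antiVal hanti _ _ (by simp only; omega) (by simp only; omega)
    · omega
    · rw [hw2 i hbi, hw1 j hbj]
      have := himg j hbj
      omega
    · rw [hw2 i hbi, hw2 j hbj]; exact hij'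
  have hτanti : StrictAntiOn τ {i | mτ ≤ i} := by
    intro i hi j hj hij
    have hi' : mτ.val ≤ i.val := Fin.le_def.mp hi
    have hj' : mτ.val ≤ j.val := Fin.le_def.mp hj
    have hij' : i.val < j.val := Fin.lt_def.mp hij
    have hiN := i.isLt; have hjN := j.isLt
    rw [Fin.lt_def, hτ, hτ]
    have hbi : (σ p).val ≤ i.val := by omega
    have hbj : (σ p).val ≤ j.val := by omega
    rw [hw1 i hbi, hw1 j hbj]
    exact monoVal hmono _ _ (by simp only; omega) (by simp only; omega)
  refine ⟨τ, ρ, ⟨mτ, hτmono, hτanti⟩, ⟨p, hρmono, hρanti⟩, ?_, ?_⟩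
  · apply Equiv.ext
    intro q
    rw [Equiv.Perm.mul_apply, hρ, hτ]
    by_cases hb : (σ p).val ≤ (σ q).val
    · have c := (hiff q).mp hb
      have hvq := hv1 q hb
      have hqN := q.isLt
      have hge : (σ p).val ≤ (fρ q).val := by omega
      rw [hw1 _ hge]
      apply congrArg
      apply Fin.ext
      show p.val + N - (fρ q).val = q.val
      omega
    · rw [hv2 q hb, hw2 _ (by omega)]
  · rw [hρ]
    apply Fin.ext
    rw [hv1 p le_rfl, Fin.val_last]
    omega

lemma uniq {σ τ ρ : Equiv.Perm (Fin (N+1))} {m p : Fin (N+1)}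
    (hmono : StrictMonoOn σ {i | i ≤ m}) (hanti : StrictAntiOn σ {i | m ≤ i})
    (hτ : Unimodal τ)
    (hρmono : StrictMonoOn ρ {i | i ≤ p}) (hρanti : StrictAntiOn ρ {i | p ≤ i})
    (hprod : τ * ρ = σ) :
    ∀ q : Fin (N+1), (ρ q).val =
      if (σ q).val < (σ p).val then (σ q).val
      else if m.val ≤ p.val then q.val + N - p.val else p.val + N - q.val := by
  have happ : ∀ q, τ (ρ q) = σ q := by
    intro q; rw [← hprod]; rfl
  have hρp : (ρ p).val = N := peakVal hρmono hρanti
  obtain ⟨mτ, hτm, hτa⟩ := hτ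
  have hsp := (σ p).isLt
  have hpN := p.isLt
  have hmN := m.isLt
  have hτlast : (τ (ρ p)).val = (σ p).val := by rw [happ p]
  have keyτ : ∀ k : ℕ, k ≤ (σ p).val → ∀ v : Fin (N+1), (k ≤ (τ v).val ↔ k ≤ v.val) := by
    intro k hk v
    have hkN : k ≤ N := by omega
    set x := τ.symm ⟨k, by omega⟩ with hxdef
    have hxval : (τ x).val = k := by
      rw [hxdef, Equiv.apply_symm_apply]
    have hvN := v.isLt
    rcases le_total mτ.val x.val with hcx | hcx
    · obtain ⟨hsum2, hiff2⟩ := upperA hτm hτa x hcx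
      rw [hxval] at hsum2 hiff2
      have h1 := (hiff2 (ρ p)).mp (by rw [hτlast]; omega)
      have hxN : x.val = N := by have := x.isLt; omega
      have h2 := hiff2 v
      omega
    · obtain ⟨hps2, hiff2⟩ := upperB hτm hτa x hcx
      rw [hxval] at hps2 hiff2
      have h1 := (hiff2 (ρ p)).mp (by rw [hτlast]; omega)
      have hxk : x.val = k := by omega
      have h2 := hiff2 v
      omega
  have keyid : ∀ v : Fin (N+1), v.val < (σ p).val → (τ v).val = v.val := by
    intro v hv
    have h1 := (keyτ v.val (by omega) v).mpr le_rfl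
    have h2 := keyτ (v.val + 1) (by omega) v
    omega
  have hρlow : ∀ q, (σ q).val < (σ p).val → (ρ q).val = (σ q).val := by
    intro q hq
    have hlt : (ρ q).val < (σ p).val := by
      by_contra hc
      have h3 := (keyτ (σ p).val le_rfl (ρ q)).mpr (by omega)
      rw [happ q] at h3
      omega
    have h4 := keyid (ρ q) hlt
    rw [happ q] at h4
    omega
  have hKρ : ∀ r : Fin (N+1), (σ p).val ≤ (σ r).val → (σ p).val ≤ (ρ r).val := by
    intro r hr
    by_contra hc
    have h4 := keyid (ρ r) (by omega)
    rw [happ r] at h4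
    omega
  intro q
  by_cases hq : (σ q).val < (σ p).val
  · rw [if_pos hq]
    exact hρlow q hq
  · rw [if_neg hq]
    rcases le_or_gt m.val p.val with hmp | hmp
    · rw [if_pos hmp]
      obtain ⟨hsum, hiff⟩ := upperA hmono hanti p hmp
      have c := (hiff q).mp (by omega)
      set aF : Fin (N+1) := ⟨p.val + (σ p).val - N, by omega⟩ with haFdef
      have haFv : aF.val = p.val + (σ p).val - N := rfl
      have haσ : (σ p).val ≤ (σ aF).val := (hiff aF).mpr (by omega)
      have hρa : (σ p).val ≤ (ρ aF).val := hKρ aF haσ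
      have h1 := smCount hρmono (q.val - aF.val) aF q c.2 (by omega)
      have h2 := smCount hρmono (p.val - q.val) q p le_rfl (by omega)
      rw [hρp] at h2
      omega
    · rw [if_neg (by omega)]
      obtain ⟨hps, hiff⟩ := upperB hmono hanti p (by omega)
      have c := (hiff q).mp (by omega)
      set bF : Fin (N+1) := ⟨p.val + N - (σ p).val, by omega⟩ with hbFdef
      have hbFv : bF.val = p.val + N - (σ p).val := rfl
      have hbσ : (σ p).val ≤ (σ bF).val := (hiff bF).mpr (by omega)
      have hρb : (σ p).val ≤ (ρ bF).val := hKρ bF hbσ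
      have h1 := anCount hρanti (q.val - p.val) p q le_rfl (by omega)
      have h2 := anCount hρanti (bF.val - q.val) q bF c.1 (by omega)
      rw [hρp] at h1
      omega

end UFact

/-- Every unimodal permutation of `{1,…,n}` is a product of two unimodal
permutations in exactly `n` ways. -/
theorem card_unimodal_factorizations (n : ℕ) (hn : 1 ≤ n)
    (σ : Equiv.Perm (Fin n)) (hσ : Unimodal σ) :
    Nat.card {p : Equiv.Perm (Fin n) × Equiv.Perm (Fin n) //
      Unimodal p.1 ∧ Unimodal p.2 ∧ p.1 * p.2 = σ} = n := by
  obtain ⟨N, rfl⟩ : ∃ N, n = N + 1 := ⟨n - 1, by omega⟩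
  obtain ⟨m, hmono, hanti⟩ := hσ
  have hbij : Function.Bijective
      (fun x : {p : Equiv.Perm (Fin (N+1)) × Equiv.Perm (Fin (N+1)) //
          Unimodal p.1 ∧ Unimodal p.2 ∧ p.1 * p.2 = σ} =>
        x.val.2.symm (Fin.last N)) := by
    constructor
    · rintro ⟨⟨τ₁, ρ₁⟩, hτ₁, hρ₁, hp₁⟩ ⟨⟨τ₂, ρ₂⟩, hτ₂, hρ₂, hp₂⟩ hxy
      simp only at hxy
      obtain ⟨p₁, hm₁, ha₁⟩ := hρ₁
      obtain ⟨p₂, hm₂, ha₂⟩ := hρ₂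
      have he₁ : ρ₁ p₁ = Fin.last N := by
        apply Fin.ext
        rw [UFact.peakVal hm₁ ha₁, Fin.val_last]
      have he₂ : ρ₂ p₂ = Fin.last N := by
        apply Fin.ext
        rw [UFact.peakVal hm₂ ha₂, Fin.val_last]
      have hq₁ : ρ₁.symm (Fin.last N) = p₁ := by rw [← he₁, Equiv.symm_apply_apply]
      have hq₂ : ρ₂.symm (Fin.last N) = p₂ := by rw [← he₂, Equiv.symm_apply_apply]
      have hpp : p₁ = p₂ := by rw [← hq₁, ← hq₂, hxy]
      subst hpp
      have hu₁ := UFact.uniq hmono hanti hτ₁ hm₁ ha₁ hp₁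
      have hu₂ := UFact.uniq hmono hanti hτ₂ hm₂ ha₂ hp₂
      have hρeq : ρ₁ = ρ₂ := by
        apply Equiv.ext
        intro q
        apply Fin.ext
        rw [hu₁ q, hu₂ q]
      have hτeq : τ₁ = τ₂ := by
        apply mul_right_cancel (b := ρ₁)
        rw [hp₁, hρeq, hp₂]
      apply Subtype.ext
      simp only
      rw [hρeq, hτeq]
    · intro p
      rcases le_total m.val p.val with hmp | hmp
      · obtain ⟨τ, ρ, hτ, hρ, hprod, hlast⟩ := UFact.existsA hmono hanti p hmp
        exact ⟨⟨(τ, ρ), hτ, hρ, hprod⟩, by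
          simp only; rw [← hlast, Equiv.symm_apply_apply]⟩
      · obtain ⟨τ, ρ, hτ, hρ, hprod, hlast⟩ := UFact.existsB hmono hanti p hmp
        exact ⟨⟨(τ, ρ), hτ, hρ, hprod⟩, by
          simp only; rw [← hlast, Equiv.symm_apply_apply]⟩
  have hcard := Nat.card_eq_of_bijective _ hbij
  rw [hcard, Nat.card_eq_fintype_card, Fintype.card_fin]
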